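/- Within a fixed sector determined by four edges, the Hilbert bisector of two sites satisfies a quadratic algebraic equation: the set of points p = (x,y) with H_Ω(s,p) = H_Ω(t,p), where the chord through s and p meets ∂Ω in fixed edges E_A (behind s) and E_B (beyond p), and the chord through t and p meets ∂Ω in fixed edges E_C (behind t) and E_D (beyond p), satisfies A x² + B xy + C y² + D x + E y + F = 0, where with edge lines a₁x+a₂y+a₃=0, b₁x+b₂y+b₃=0, c₁x+c₂y+c₃=0, d₁x+d₂y+d₃=0 and k = ((b₁s_x+b₂s_y+b₃)(c₁t_x+c₂t_y+c₃))/((d₁t_x+d₂t_y+d₃)(a₁s_x+a₂s_y+a₃)), the coefficients are A = b₁c₁−a₁d₁k, B = b₂c₁+b₁c₂−a₁d₂k−a₂d₁k, C = b₂c₂−a₂d₂k, D = b₃c₁+c₃b₁−a₃d₁k−a₁d₃k, E = b₃c₂+b₂c₃−a₂d₃k−a₃d₂k, F = b₃c₃−a₃d₃k. -/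
import Mathlib


/-- Evaluation of the line `e₁ x + e₂ y + e₃ = 0` at the point `p`. -/
def lev (e1 e2 e3 : ℝ) (p : ℝ × ℝ) : ℝ := e1 * p.1 + e2 * p.2 + e3


lemma lev_seg (e1 e2 e3 : ℝ) {x z w : ℝ × ℝ} (hx : lev e1 e2 e3 x = 0)
    (hz : z ∈ segment ℝ x w) :
    lev e1 e2 e3 z * ‖w - x‖ = lev e1 e2 e3 w * ‖z - x‖ := by
  obtain ⟨γ, δ, hγ, hδ, hsum, hzw⟩ := hz
  have hlev : lev e1 e2 e3 z = δ * lev e1 e2 e3 w := by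
    subst hzw
    simp only [lev, Prod.fst_add, Prod.snd_add, Prod.smul_fst, Prod.smul_snd,
      smul_eq_mul] at *
    linear_combination γ * hx - e3 * hsum
  have hvec : z - x = δ • (w - x) := by
    rw [← hzw]
    have : γ = 1 - δ := by linarith
    subst this
    module
  have hnorm : ‖z - x‖ = δ * ‖w - x‖ := by
    rw [hvec, norm_smul, Real.norm_eq_abs, abs_of_nonneg hδ]
  rw [hlev, hnorm]; ring

/-- Within a fixed sector `S(s,t,E_A,E_B,E_C,E_D)` determined by four edges of a
convex polygon `Ω`, any point `p` of the Hilbert bisector of the sites `s` and `t`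
satisfies the quadratic equation `A x² + B xy + C y² + D x + E y + F = 0` with the
stated coefficients. -/
theorem bisector_quadratic_in_sector
    (Ω : Set (ℝ × ℝ))
    (hconv : Convex ℝ Ω) (hcomp : IsCompact Ω) (hne : (interior Ω).Nonempty)
    (H : ℝ × ℝ → ℝ × ℝ → ℝ)
    (hH0 : ∀ p, H p p = 0)
    (hHdef : ∀ s t x y : ℝ × ℝ,
      s ∈ interior Ω → t ∈ interior Ω → s ≠ t →
      x ∈ frontier Ω → y ∈ frontier Ω →
      s ∈ segment ℝ x t → t ∈ segment ℝ s y →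
      H s t = (1 / 2) * Real.log ((‖s - y‖ * ‖t - x‖) / (‖t - y‖ * ‖s - x‖)))
    (a1 a2 a3 b1 b2 b3 c1 c2 c3 d1 d2 d3 : ℝ)
    (s t p : ℝ × ℝ)
    (hs : s ∈ interior Ω) (ht : t ∈ interior Ω) (hp : p ∈ interior Ω)
    -- the chord through `s` and `p` meets `∂Ω` on edge `E_A` (behind `s`) and
    -- edge `E_B` (beyond `p`), in the order `⟨x_A, s, p, x_B⟩`
    (hchord_sp : ∃ xA xB : ℝ × ℝ, xA ∈ frontier Ω ∧ lev a1 a2 a3 xA = 0 ∧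
      xB ∈ frontier Ω ∧ lev b1 b2 b3 xB = 0 ∧
      s ∈ segment ℝ xA p ∧ p ∈ segment ℝ s xB)
    -- the chord through `t` and `p` meets `∂Ω` on edge `E_C` (behind `t`) and
    -- edge `E_D` (beyond `p`), in the order `⟨x_C, t, p, x_D⟩`
    (hchord_tp : ∃ xC xD : ℝ × ℝ, xC ∈ frontier Ω ∧ lev c1 c2 c3 xC = 0 ∧
      xD ∈ frontier Ω ∧ lev d1 d2 d3 xD = 0 ∧
      t ∈ segment ℝ xC p ∧ p ∈ segment ℝ t xD)
    -- all points involved lie strictly on the same side of each edge line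
    (hsideA : 0 < lev a1 a2 a3 s * lev a1 a2 a3 p ∧ 0 < lev a1 a2 a3 s * lev a1 a2 a3 t)
    (hsideB : 0 < lev b1 b2 b3 s * lev b1 b2 b3 p ∧ 0 < lev b1 b2 b3 s * lev b1 b2 b3 t)
    (hsideC : 0 < lev c1 c2 c3 s * lev c1 c2 c3 p ∧ 0 < lev c1 c2 c3 s * lev c1 c2 c3 t)
    (hsideD : 0 < lev d1 d2 d3 s * lev d1 d2 d3 p ∧ 0 < lev d1 d2 d3 s * lev d1 d2 d3 t)
    -- `p` is on the Hilbert bisector of `s` and `t`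
    (hbis : H s p = H t p) :
    ∀ k : ℝ, k = (lev b1 b2 b3 s * lev c1 c2 c3 t) / (lev d1 d2 d3 t * lev a1 a2 a3 s) →
      (b1 * c1 - a1 * d1 * k) * p.1 ^ 2
        + (b2 * c1 + b1 * c2 - a1 * d2 * k - a2 * d1 * k) * p.1 * p.2
        + (b2 * c2 - a2 * d2 * k) * p.2 ^ 2
        + (b3 * c1 + c3 * b1 - a3 * d1 * k - a1 * d3 * k) * p.1
        + (b3 * c2 + b2 * c3 - a2 * d3 * k - a3 * d2 * k) * p.2
        + (b3 * c3 - a3 * d3 * k) = 0 := by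
  intro k hk
  obtain ⟨xA, xB, hxA, hlevA, hxB, hlevB, hsA, hsB⟩ := hchord_sp
  obtain ⟨xC, xD, hxC, hlevC, hxD, hlevD, htC, htD⟩ := hchord_tp
  -- abbreviations
  set As := lev a1 a2 a3 s with hAsdef
  set Ap := lev a1 a2 a3 p with hApdef
  set Bs := lev b1 b2 b3 s with hBsdef
  set Bp := lev b1 b2 b3 p with hBpdef
  set Cp := lev c1 c2 c3 p with hCpdef
  set Ct := lev c1 c2 c3 t with hCtdef
  set Dp := lev d1 d2 d3 p with hDpdef
  set Dt := lev d1 d2 d3 t with hDtdef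
  -- nonvanishing of the line evaluations
  have hAs : As ≠ 0 := fun h => by rw [h, zero_mul] at hsideA; exact lt_irrefl 0 hsideA.1
  have hAp : Ap ≠ 0 := fun h => by rw [h, mul_zero] at hsideA; exact lt_irrefl 0 hsideA.1
  have hBs : Bs ≠ 0 := fun h => by rw [h, zero_mul] at hsideB; exact lt_irrefl 0 hsideB.1
  have hBp : Bp ≠ 0 := fun h => by rw [h, mul_zero] at hsideB; exact lt_irrefl 0 hsideB.1
  have hCp : Cp ≠ 0 := fun h => by rw [h, mul_zero] at hsideC; exact lt_irrefl 0 hsideC.1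
  have hCt : Ct ≠ 0 := fun h => by rw [h, mul_zero] at hsideC; exact lt_irrefl 0 hsideC.2
  have hDp : Dp ≠ 0 := fun h => by rw [h, mul_zero] at hsideD; exact lt_irrefl 0 hsideD.1
  have hDt : Dt ≠ 0 := fun h => by rw [h, mul_zero] at hsideD; exact lt_irrefl 0 hsideD.2
  -- interior points differ from frontier points
  have hne' : ∀ q : ℝ × ℝ, q ∈ interior Ω → ∀ r : ℝ × ℝ, r ∈ frontier Ω → q ≠ r :=
    fun q hq r hr h => hr.2 (h ▸ hq)
  have nSA : 0 < ‖s - xA‖ := by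
    rw [norm_pos_iff]; exact sub_ne_zero_of_ne (hne' s hs xA hxA)
  have nPA : 0 < ‖p - xA‖ := by
    rw [norm_pos_iff]; exact sub_ne_zero_of_ne (hne' p hp xA hxA)
  have nSB : 0 < ‖s - xB‖ := by
    rw [norm_pos_iff]; exact sub_ne_zero_of_ne (hne' s hs xB hxB)
  have nPB : 0 < ‖p - xB‖ := by
    rw [norm_pos_iff]; exact sub_ne_zero_of_ne (hne' p hp xB hxB)
  have nTC : 0 < ‖t - xC‖ := by
    rw [norm_pos_iff]; exact sub_ne_zero_of_ne (hne' t ht xC hxC)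
  have nPC : 0 < ‖p - xC‖ := by
    rw [norm_pos_iff]; exact sub_ne_zero_of_ne (hne' p hp xC hxC)
  have nTD : 0 < ‖t - xD‖ := by
    rw [norm_pos_iff]; exact sub_ne_zero_of_ne (hne' t ht xD hxD)
  have nPD : 0 < ‖p - xD‖ := by
    rw [norm_pos_iff]; exact sub_ne_zero_of_ne (hne' p hp xD hxD)
  -- affine ratio identities along the two chords
  have hsB' : p ∈ segment ℝ xB s := by rw [segment_symm]; exact hsB
  have htD' : p ∈ segment ℝ xD t := by rw [segment_symm]; exact htD
  have h1 : Bp * ‖s - xB‖ = Bs * ‖p - xB‖ := lev_seg b1 b2 b3 hlevB hsB'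
  have h2 : As * ‖p - xA‖ = Ap * ‖s - xA‖ := lev_seg a1 a2 a3 hlevA hsA
  have h3 : Ct * ‖p - xC‖ = Cp * ‖t - xC‖ := lev_seg c1 c2 c3 hlevC htC
  have h4 : Dp * ‖t - xD‖ = Dt * ‖p - xD‖ := lev_seg d1 d2 d3 hlevD htD'
  -- equality of the two cross-ratios
  have h5 : ‖s - xB‖ * ‖p - xA‖ * (‖p - xD‖ * ‖t - xC‖)
      = ‖t - xD‖ * ‖p - xC‖ * (‖p - xB‖ * ‖s - xA‖) := by
    by_cases hsp : s = p
    · by_cases htp : t = p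
      · rw [hsp, htp]; ring
      · have h0 : H t p = 0 := by rw [← hbis, hsp, hH0]
        have hE := hHdef t p xC xD ht hp htp hxC hxD htC htD
        rw [h0] at hE
        have hRpos : 0 < ‖t - xD‖ * ‖p - xC‖ / (‖p - xD‖ * ‖t - xC‖) :=
          div_pos (mul_pos nTD nPC) (mul_pos nPD nTC)
        have hR1 : ‖t - xD‖ * ‖p - xC‖ / (‖p - xD‖ * ‖t - xC‖) = 1 := by
          have hlog : Real.log (‖t - xD‖ * ‖p - xC‖ / (‖p - xD‖ * ‖t - xC‖)) = 0 := by
            linarith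
          have := Real.exp_log hRpos
          rw [hlog, Real.exp_zero] at this
          exact this.symm
        have h6 : ‖t - xD‖ * ‖p - xC‖ = ‖p - xD‖ * ‖t - xC‖ :=
          (div_eq_one_iff_eq (by positivity)).mp hR1
        rw [hsp]
        linear_combination (-(‖p - xB‖ * ‖p - xA‖)) * h6
    · by_cases htp : t = p
      · have h0 : H s p = 0 := by rw [hbis, htp, hH0]
        have hE := hHdef s p xA xB hs hp hsp hxA hxB hsA hsB
        rw [h0] at hE
        have hRpos : 0 < ‖s - xB‖ * ‖p - xA‖ / (‖p - xB‖ * ‖s - xA‖) :=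
          div_pos (mul_pos nSB nPA) (mul_pos nPB nSA)
        have hR1 : ‖s - xB‖ * ‖p - xA‖ / (‖p - xB‖ * ‖s - xA‖) = 1 := by
          have hlog : Real.log (‖s - xB‖ * ‖p - xA‖ / (‖p - xB‖ * ‖s - xA‖)) = 0 := by
            linarith
          have := Real.exp_log hRpos
          rw [hlog, Real.exp_zero] at this
          exact this.symm
        have h6 : ‖s - xB‖ * ‖p - xA‖ = ‖p - xB‖ * ‖s - xA‖ :=
          (div_eq_one_iff_eq (by positivity)).mp hR1
        rw [htp]
        linear_combination (‖p - xD‖ * ‖p - xC‖) * h6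
      · have hE1 := hHdef s p xA xB hs hp hsp hxA hxB hsA hsB
        have hE2 := hHdef t p xC xD ht hp htp hxC hxD htC htD
        rw [hE1, hE2] at hbis
        have hlog : Real.log (‖s - xB‖ * ‖p - xA‖ / (‖p - xB‖ * ‖s - xA‖))
            = Real.log (‖t - xD‖ * ‖p - xC‖ / (‖p - xD‖ * ‖t - xC‖)) := by linarith
        have hR1pos : 0 < ‖s - xB‖ * ‖p - xA‖ / (‖p - xB‖ * ‖s - xA‖) :=
          div_pos (mul_pos nSB nPA) (mul_pos nPB nSA)
        have hR2pos : 0 < ‖t - xD‖ * ‖p - xC‖ / (‖p - xD‖ * ‖t - xC‖) :=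
          div_pos (mul_pos nTD nPC) (mul_pos nPD nTC)
        have hReq : ‖s - xB‖ * ‖p - xA‖ / (‖p - xB‖ * ‖s - xA‖)
            = ‖t - xD‖ * ‖p - xC‖ / (‖p - xD‖ * ‖t - xC‖) := by
          calc ‖s - xB‖ * ‖p - xA‖ / (‖p - xB‖ * ‖s - xA‖)
              = Real.exp (Real.log (‖s - xB‖ * ‖p - xA‖ / (‖p - xB‖ * ‖s - xA‖))) :=
                (Real.exp_log hR1pos).symm
            _ = Real.exp (Real.log (‖t - xD‖ * ‖p - xC‖ / (‖p - xD‖ * ‖t - xC‖))) := by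
                rw [hlog]
            _ = ‖t - xD‖ * ‖p - xC‖ / (‖p - xD‖ * ‖t - xC‖) := Real.exp_log hR2pos
        rw [div_eq_div_iff (by positivity) (by positivity)] at hReq
        linarith
  -- key polynomial identity among the line evaluations
  have key : Bs * Ct * (Ap * Dp) = As * Dt * (Bp * Cp) := by
    have hmul : (Bs * Ct * (Ap * Dp)) * (‖p - xB‖ * ‖s - xA‖ * (‖t - xD‖ * ‖p - xC‖))
        = (As * Dt * (Bp * Cp)) * (‖p - xB‖ * ‖s - xA‖ * (‖t - xD‖ * ‖p - xC‖)) := by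
      linear_combination
        (-(Ap * ‖s - xA‖ * Dp * ‖t - xD‖ * Ct * ‖p - xC‖)) * h1
        + (-(Bp * ‖s - xB‖ * Dp * ‖t - xD‖ * Ct * ‖p - xC‖)) * h2
        + (Bp * ‖s - xB‖ * As * ‖p - xA‖ * Ct * ‖p - xC‖) * h4
        + (Bp * ‖s - xB‖ * As * ‖p - xA‖ * Dt * ‖p - xD‖) * h3
        + (Bp * As * Dt * Cp) * h5
    exact mul_right_cancel₀ (by positivity) hmul
  -- conclude: the quadratic is `Bp * Cp - k * (Ap * Dp)`
  have hgoal : (b1 * c1 - a1 * d1 * k) * p.1 ^ 2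
        + (b2 * c1 + b1 * c2 - a1 * d2 * k - a2 * d1 * k) * p.1 * p.2
        + (b2 * c2 - a2 * d2 * k) * p.2 ^ 2
        + (b3 * c1 + c3 * b1 - a3 * d1 * k - a1 * d3 * k) * p.1
        + (b3 * c2 + b2 * c3 - a2 * d3 * k - a3 * d2 * k) * p.2
        + (b3 * c3 - a3 * d3 * k) = Bp * Cp - k * (Ap * Dp) := by
    rw [hBpdef, hCpdef, hApdef, hDpdef]; simp only [lev]; ring
  rw [hgoal, hk, sub_eq_zero, div_mul_eq_mul_div,
    eq_div_iff (mul_ne_zero hDt hAs)]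
  linear_combination -key
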